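/- Let Q be a quiver with one-dimensional vertices containing a connected pair (v₁, v₂) with arrows a₁ : v₁ → v₂ and a₂ : v₂ → v₁, and suppose there are exactly two directed paths from v₁ to v₂ and exactly two from v₂ to v₁; write Γ₁ for the extra path from v₁ to v₂ and Γ₂ for the extra path from v₂ to v₁, and assume Γ₁ and Γ₂ are internally vertex-disjoint. Then the only primitive cycles of Q passing through both v₁ and v₂ are: p = (a₁, a₂), q₁ = (a₁, Γ₂), q₂ = (Γ₁, a₂), and s = (Γ₁, Γ₂); and for the multiset U_q consisting of all arrows of q₁ and q₂, the only partitions of U_q into primitive cycles are {q₁, q₂} and {p, s}. -/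

import Mathlib

/-- A quiver (finite directed multigraph): a finite set of vertices `V`,
a finite set of arrows `A`, and source/target maps `s`, `t`. -/
structure Quiv where
  V : Type
  A : Type
  [fintV : Fintype V]
  [fintA : Fintype A]
  [decV : DecidableEq V]
  [decA : DecidableEq A]
  s : A → V
  t : A → V

attribute [instance] Quiv.fintV Quiv.fintA Quiv.decV Quiv.decA

namespace Quiv

variable (Q : Quiv)

/-- Cyclic access to the entries of a nonempty list. -/
def cyc (l : List Q.A) (hl : l ≠ []) (i : ℕ) : Q.A :=
  l.get ⟨i % l.length, Nat.mod_lt _ (List.length_pos_iff.mpr hl)⟩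

/-- `l` is a (nonempty) directed cycle: consecutive arrows compose, cyclically. -/
def IsCycleList (l : List Q.A) : Prop :=
  ∃ hl : l ≠ [], ∀ i : ℕ, Q.t (Q.cyc l hl i) = Q.s (Q.cyc l hl (i + 1))

/-- A primitive (simple) cycle: a directed cycle visiting no vertex more than once. -/
def IsPrimCycle (l : List Q.A) : Prop :=
  Q.IsCycleList l ∧ (l.map Q.s).Nodup

/-- The set of primitive cycles of `Q`, each recorded by its (finite) set of arrows.
A primitive cycle is determined, up to rotation, by its set of arrows. -/
def primCycles : Set (Finset Q.A) :=
  { S | ∃ l : List Q.A, Q.IsPrimCycle l ∧ l.toFinset = S }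

/-- The number of primitive cycles of `Q`. -/
noncomputable def numPrimCycles : ℕ := Q.primCycles.ncard

/-- One-step reachability. -/
def Step (u v : Q.V) : Prop := ∃ a : Q.A, Q.s a = u ∧ Q.t a = v

/-- `Q` is strongly connected: every vertex is reachable from every other
by a directed path. -/
def StronglyConnected : Prop := ∀ u v : Q.V, Relation.ReflTransGen Q.Step u v

/-- `Q` has no loops. -/
def NoLoops : Prop := ∀ a : Q.A, Q.s a ≠ Q.t a

/-- In-degree of a vertex (arrows counted with multiplicity). -/
def inDeg (v : Q.V) : ℕ := (Finset.univ.filter fun a => Q.t a = v).card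

/-- Out-degree of a vertex (arrows counted with multiplicity). -/
def outDeg (v : Q.V) : ℕ := (Finset.univ.filter fun a => Q.s a = v).card

/-- `F(Q) = |C| + |V| - |A| - 1`, the codimension of the associated toric variety. -/
noncomputable def F : ℤ :=
  (Q.numPrimCycles : ℤ) + (Fintype.card Q.V : ℤ) - (Fintype.card Q.A : ℤ) - 1


/-- A multiset of arrows is Eulerian if at every vertex the number of arrows of `U`
entering the vertex (with multiplicity) equals the number leaving it. -/
def Eulerian (U : Multiset Q.A) : Prop :=
  ∀ v : Q.V, (U.filter fun a => Q.t a = v).card = (U.filter fun a => Q.s a = v).card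

/-- `P` is a partition of the arrow multiset `U` into primitive cycles: a multiset of
arrow sets of primitive cycles whose multiset sum is `U`. -/
def IsCyclePartition (U : Multiset Q.A) (P : Multiset (Finset Q.A)) : Prop :=
  (∀ c ∈ P, c ∈ Q.primCycles) ∧ (P.map Finset.val).sum = U

/-- The set of vertices met by a set of arrows. -/
def verts (S : Finset Q.A) : Finset Q.V := S.image Q.s ∪ S.image Q.t

/-- The list of vertices visited by a list of arrows (for a composable list:
the source of the first arrow followed by the targets of all arrows). -/
def pathVerts (p : List Q.A) : List Q.V :=
  match p with
  | [] => []
  | a :: _ => Q.s a :: p.map Q.t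

/-- `p` is a simple directed path: consecutive arrows compose and it visits no
vertex twice. -/
def IsDirPath (p : List Q.A) : Prop :=
  p.Chain' (fun a b => Q.t a = Q.s b) ∧ (Q.pathVerts p).Nodup

/-- `p` is a (nonempty) simple directed path from `u` to `w`. -/
def IsPathFromTo (p : List Q.A) (u w : Q.V) : Prop :=
  Q.IsDirPath p ∧ p ≠ [] ∧ (Q.pathVerts p).head? = some u ∧ (Q.pathVerts p).getLast? = some w


variable {Q : Quiv}

lemma pathVerts_cons (a : Q.A) (r : List Q.A) :
    Q.pathVerts (a :: r) = Q.s a :: (a :: r).map Q.t := rfl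

lemma pathVerts_length {p : List Q.A} (hp : p ≠ []) :
    (Q.pathVerts p).length = p.length + 1 := by
  cases p with
  | nil => simp at hp
  | cons a r => simp [pathVerts_cons]

lemma pathVerts_getElem_succ {p : List Q.A} {i : ℕ} (hi : i < p.length)
    (h' : i + 1 < (Q.pathVerts p).length) :
    (Q.pathVerts p)[i+1] = Q.t (p[i]'hi) := by
  cases p with
  | nil => simp at hi
  | cons a r => simp only [pathVerts_cons, List.getElem_cons_succ, List.getElem_map]

lemma pathVerts_getElem_zero {p : List Q.A} (h0 : 0 < p.length)
    (h' : 0 < (Q.pathVerts p).length) :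
    (Q.pathVerts p)[0] = Q.s (p[0]'h0) := by
  cases p with
  | nil => simp at h0
  | cons a r => simp [pathVerts_cons]

/-- Bundled facts about a simple directed path. -/
structure PathFacts (Q : Quiv) (p : List Q.A) (u w : Q.V) : Prop where
  ne : p ≠ []
  src : ∀ i (h : i < p.length), Q.s (p[i]'h) = (Q.pathVerts p)[i]'(by rw [pathVerts_length ne]; omega)
  tgt : ∀ i (h : i < p.length), Q.t (p[i]'h) = (Q.pathVerts p)[i+1]'(by rw [pathVerts_length ne]; omega)
  nd : (Q.pathVerts p).Nodup
  head : Q.s (p[0]'(List.length_pos_iff.mpr ne)) = u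
  last : (Q.pathVerts p)[p.length]'(by rw [pathVerts_length ne]; omega) = w

lemma IsPathFromTo.facts {p : List Q.A} {u w : Q.V} (hp : Q.IsPathFromTo p u w) :
    Q.PathFacts p u w := by
  obtain ⟨⟨hchain, hnd⟩, hne, hhead, hlast⟩ := hp
  have hplen : 0 < p.length := List.length_pos_iff.mpr hne
  have hvlen : (Q.pathVerts p).length = p.length + 1 := pathVerts_length hne
  have hsrc : ∀ i (h : i < p.length), Q.s (p[i]'h) = (Q.pathVerts p)[i]'(by rw [pathVerts_length hne]; omega) := by
    intro i
    induction i with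
    | zero => intro h; exact (pathVerts_getElem_zero h _).symm
    | succ j ih =>
      intro h
      have hj : j < p.length - 1 := by omega
      have hR := List.isChain_iff_getElem.mp hchain j (by omega)
      rw [← hR, pathVerts_getElem_succ (by omega)]
  have htgt : ∀ i (h : i < p.length), Q.t (p[i]'h) = (Q.pathVerts p)[i+1]'(by rw [pathVerts_length hne]; omega) := by
    intro i h
    exact (pathVerts_getElem_succ h _).symm
  refine ⟨hne, hsrc, htgt, hnd, ?_, ?_⟩
  · rw [List.head?_eq_getElem?, List.getElem?_eq_getElem (by omega)] at hhead
    have := Option.some_injective _ hhead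
    rw [hsrc 0 hplen, this]
  · rw [List.getLast?_eq_getElem?, hvlen] at hlast
    simp only [Nat.add_sub_cancel] at hlast
    rw [List.getElem?_eq_getElem (by omega)] at hlast
    exact Option.some_injective _ hlast

namespace PathFacts

variable {p : List Q.A} {u w : Q.V} (F : Q.PathFacts p u w)
include F

lemma src_inj {i j : ℕ} (hi : i < p.length) (hj : j < p.length)
    (h : Q.s (p[i]'hi) = Q.s (p[j]'hj)) : i = j := by
  have hv := pathVerts_length F.ne
  rw [F.src i hi, F.src j hj] at h
  exact (F.nd.getElem_inj_iff).mp h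

lemma tgt_inj {i j : ℕ} (hi : i < p.length) (hj : j < p.length)
    (h : Q.t (p[i]'hi) = Q.t (p[j]'hj)) : i = j := by
  rw [F.tgt i hi, F.tgt j hj] at h
  have := (F.nd.getElem_inj_iff).mp h
  omega

lemma src_ne_last {i : ℕ} (hi : i < p.length) : Q.s (p[i]'hi) ≠ w := by
  intro h
  rw [← F.last, F.src i hi] at h
  have := (F.nd.getElem_inj_iff).mp h
  omega

lemma tgt_ne_head {i : ℕ} (hi : i < p.length) : Q.t (p[i]'hi) ≠ u := by
  intro h
  have h0 : (0:ℕ) < p.length := by omega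
  rw [← F.head, F.src 0 h0, F.tgt i hi] at h
  have := (F.nd.getElem_inj_iff).mp h
  omega

lemma tgt_last : Q.t (p[p.length - 1]'(by have := List.length_pos_iff.mpr F.ne; omega)) = w := by
  have hlp : 0 < p.length := List.length_pos_iff.mpr F.ne
  rw [F.tgt (p.length - 1) (by omega)]
  have h1 : p.length - 1 + 1 = p.length := by omega
  simp only [h1]
  exact F.last

lemma tgt_ne_last {i : ℕ} (hi : i < p.length) (hil : i ≠ p.length - 1) :
    Q.t (p[i]'hi) ≠ w := by
  intro h
  rw [← F.tgt_last] at h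
  exact hil (F.tgt_inj hi (by omega) h)

lemma src_ne_head {i : ℕ} (hi : i < p.length) (hi0 : i ≠ 0) : Q.s (p[i]'hi) ≠ u := by
  intro h
  rw [← F.head] at h
  exact hi0 (F.src_inj hi (by omega) h)

lemma chain {i : ℕ} (hi : i + 1 < p.length) :
    Q.t (p[i]'(by omega)) = Q.s (p[i+1]'hi) := by
  rw [F.src (i+1) hi, F.tgt i (by omega)]

lemma arrows_nodup : p.Nodup := by
  rw [List.nodup_iff_injective_get]
  intro ⟨i, hi⟩ ⟨j, hj⟩ h
  simp only [List.get_eq_getElem] at h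
  exact Fin.ext (F.src_inj hi hj (by rw [h]))

lemma src_mem_verts {i : ℕ} (hi : i < p.length) : Q.s (p[i]'hi) ∈ Q.pathVerts p := by
  rw [F.src i hi]; exact List.getElem_mem _

lemma tgt_mem_verts {i : ℕ} (hi : i < p.length) : Q.t (p[i]'hi) ∈ Q.pathVerts p := by
  rw [F.tgt i hi]; exact List.getElem_mem _

lemma head_mem_verts : u ∈ Q.pathVerts p := by
  rw [← F.head]; exact F.src_mem_verts _

lemma last_mem_verts : w ∈ Q.pathVerts p := by
  rw [← F.tgt_last]; exact F.tgt_mem_verts _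

end PathFacts

lemma cyc_eq_getElem {l : List Q.A} (hl : l ≠ []) {i : ℕ} (hi : i < l.length) :
    Q.cyc l hl i = l[i]'hi := by
  simp [cyc, List.get_eq_getElem, Nat.mod_eq_of_lt hi]

lemma cyc_mem {l : List Q.A} (hl : l ≠ []) (i : ℕ) : Q.cyc l hl i ∈ l := by
  rw [cyc]; exact List.get_mem _ _

lemma cyc_add_length {l : List Q.A} (hl : l ≠ []) (i : ℕ) :
    Q.cyc l hl (i + l.length) = Q.cyc l hl i := by
  simp [cyc, Nat.add_mod_right]

lemma IsCycleList.tgt_mem_src {l : List Q.A} (hc : Q.IsCycleList l) {a : Q.A} (ha : a ∈ l) :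
    Q.t a ∈ l.map Q.s := by
  obtain ⟨hl, hcyc⟩ := hc
  obtain ⟨i, hi, rfl⟩ := List.getElem_of_mem ha
  rw [← cyc_eq_getElem hl hi, hcyc i]
  exact List.mem_map_of_mem (cyc_mem hl _)

lemma rotate_ne_nil {l : List Q.A} (hl : l ≠ []) (k : ℕ) : l.rotate k ≠ [] := by
  rw [← List.length_pos_iff, List.length_rotate]
  exact List.length_pos_iff.mpr hl

lemma cyc_rotate {l : List Q.A} (hl : l ≠ []) (k i : ℕ) :
    Q.cyc (l.rotate k) (rotate_ne_nil hl k) i = Q.cyc l hl (i + k) := by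
  simp only [cyc, List.get_rotate, List.length_rotate]
  congr 1
  simp [Nat.mod_add_mod]

lemma IsPrimCycle.rotate {l : List Q.A} (h : Q.IsPrimCycle l) (k : ℕ) :
    Q.IsPrimCycle (l.rotate k) := by
  obtain ⟨⟨hl, hcyc⟩, hnd⟩ := h
  refine ⟨⟨rotate_ne_nil hl k, fun i => ?_⟩, ?_⟩
  · rw [cyc_rotate hl, cyc_rotate hl]
    rw [show i + 1 + k = (i + k) + 1 by omega]
    exact hcyc (i + k)
  · rw [List.map_rotate]
    exact List.nodup_rotate.mpr hnd

/-- Constructor for `IsPathFromTo` from indexed data. -/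
lemma isPathFromTo_mk {p : List Q.A} {u w : Q.V} (hne : p ≠ [])
    (hchain : ∀ i (h : i + 1 < p.length), Q.t (p[i]'(by omega)) = Q.s (p[i+1]'h))
    (hhead : Q.s (p[0]'(List.length_pos_iff.mpr hne)) = u)
    (hlast : Q.t (p[p.length-1]'(by have := List.length_pos_iff.mpr hne; omega)) = w)
    (hinj : ∀ i j (hi : i < p.length) (hj : j < p.length),
      Q.s (p[i]'hi) = Q.s (p[j]'hj) → i = j)
    (hlw : ∀ i (hi : i < p.length), Q.s (p[i]'hi) ≠ w) :
    Q.IsPathFromTo p u w := by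
  have hplen : 0 < p.length := List.length_pos_iff.mpr hne
  have hvlen : (Q.pathVerts p).length = p.length + 1 := pathVerts_length hne
  have hchain' : p.Chain' (fun a b => Q.t a = Q.s b) := by
    refine List.isChain_iff_getElem.mpr ?_
    intro i hi
    exact hchain i (by omega)
  have hv : ∀ i (hi : i < p.length),
      (Q.pathVerts p)[i]'(by omega) = Q.s (p[i]'hi) := by
    intro i
    induction i with
    | zero => intro hi; exact pathVerts_getElem_zero hi _
    | succ j ih =>
      intro hi
      rw [pathVerts_getElem_succ (by omega : j < p.length), hchain j hi]
  have hvlast : (Q.pathVerts p)[p.length]'(by omega) = w := by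
    have h2 : (Q.pathVerts p)[(p.length - 1)+1]'(by omega) =
        Q.t (p[p.length-1]'(by omega)) := pathVerts_getElem_succ _ _
    simp only [show p.length - 1 + 1 = p.length from by omega] at h2
    exact h2.trans hlast
  have hnd : (Q.pathVerts p).Nodup := by
    rw [List.nodup_iff_injective_get]
    rintro ⟨i, hi⟩ ⟨j, hj⟩ hEq
    simp only [List.get_eq_getElem] at hEq
    rw [hvlen] at hi hj
    have : i = j := by
      rcases Nat.lt_or_ge i p.length with hi' | hi' <;>
        rcases Nat.lt_or_ge j p.length with hj' | hj'
      · rw [hv i hi', hv j hj'] at hEq; exact hinj i j hi' hj' hEq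
      · have hj'' : j = p.length := by omega
        subst hj''
        rw [hv i hi', hvlast] at hEq
        exact absurd hEq (hlw i hi')
      · have hi'' : i = p.length := by omega
        subst hi''
        rw [hv j hj', hvlast] at hEq
        exact absurd hEq.symm (hlw j hj')
      · omega
    exact Fin.ext this
  refine ⟨⟨hchain', hnd⟩, hne, ?_, ?_⟩
  · rw [List.head?_eq_getElem?, List.getElem?_eq_getElem (by omega)]
    rw [hv 0 hplen, hhead]
  · rw [List.getLast?_eq_getElem?, hvlen, Nat.add_sub_cancel,
      List.getElem?_eq_getElem (by omega), hvlast]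

/-- Splitting a primitive cycle through two vertices into two simple paths. -/
lemma cycle_split {l : List Q.A} (h : Q.IsPrimCycle l) {x y : Q.V} (hxy : x ≠ y)
    (hx : x ∈ l.map Q.s) (hy : y ∈ l.map Q.s) :
    ∃ P₁ P₂ : List Q.A, Q.IsPathFromTo P₁ x y ∧ Q.IsPathFromTo P₂ y x ∧
      (↑l : Multiset Q.A) = ↑P₁ + ↑P₂ := by
  have hl : l ≠ [] := h.1.1
  -- find index of x and rotate
  obtain ⟨k, hk, hkx⟩ : ∃ k, ∃ hk : k < l.length, Q.s (l[k]'hk) = x := by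
    obtain ⟨a, ha, hax⟩ := List.mem_map.mp hx
    obtain ⟨k, hk, rfl⟩ := List.getElem_of_mem ha
    exact ⟨k, hk, hax⟩
  set l' := l.rotate k with hl'def
  have h' : Q.IsPrimCycle l' := h.rotate k
  obtain ⟨⟨hl', hcyc'⟩, hnd'⟩ := h'
  have hlen : l'.length = l.length := List.length_rotate l k
  have hn : 0 < l'.length := List.length_pos_iff.mpr hl'
  -- getElem version of the cyclic chain
  have hchain : ∀ i (hi : i + 1 < l'.length), Q.t (l'[i]'(by omega)) = Q.s (l'[i+1]'hi) := by
    intro i hi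
    have := hcyc' i
    rwa [cyc_eq_getElem hl' (by omega), cyc_eq_getElem hl' hi] at this
  have hwrap : Q.t (l'[l'.length - 1]'(by omega)) = Q.s (l'[0]'hn) := by
    have := hcyc' (l'.length - 1)
    rwa [cyc_eq_getElem hl' (by omega), show l'.length - 1 + 1 = 0 + l'.length by omega,
      cyc_add_length hl', cyc_eq_getElem hl' hn] at this
  -- source-injectivity on l'
  have hinj : ∀ i j (hi : i < l'.length) (hj : j < l'.length),
      Q.s (l'[i]'hi) = Q.s (l'[j]'hj) → i = j := by
    intro i j hi hj hEq
    have hndinj := List.nodup_iff_injective_get.mp hnd'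
    have := hndinj (a₁ := ⟨i, by simpa using hi⟩) (a₂ := ⟨j, by simpa using hj⟩)
      (by simp only [List.get_eq_getElem, List.getElem_map]; exact hEq)
    simpa using congrArg Fin.val this
  -- start of l' is x
  have h0x : Q.s (l'[0]'hn) = x := by
    have e1 : Q.cyc l' hl' 0 = Q.cyc l hl (0 + k) := cyc_rotate hl k 0
    rw [← cyc_eq_getElem hl' hn, e1, Nat.zero_add, cyc_eq_getElem hl hk, hkx]
  -- find index of y in l'
  obtain ⟨j, hj, hjy⟩ : ∃ j, ∃ hj : j < l'.length, Q.s (l'[j]'hj) = y := by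
    have hy' : y ∈ l'.map Q.s := by
      rw [hl'def, List.map_rotate]
      exact ((List.rotate_perm _ _).mem_iff).mpr hy
    obtain ⟨a, ha, hay⟩ := List.mem_map.mp hy'
    obtain ⟨j, hj, rfl⟩ := List.getElem_of_mem ha
    exact ⟨j, hj, hay⟩
  have hj0 : j ≠ 0 := by
    intro h0
    subst h0
    exact hxy (h0x ▸ hjy ▸ rfl)
  -- the two paths
  refine ⟨l'.take j, l'.drop j, ?_, ?_, ?_⟩
  · -- path from x to y
    have hlen₁ : (l'.take j).length = j := by simp [List.length_take]; omega
    have hne₁ : l'.take j ≠ [] := by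
      rw [← List.length_pos_iff, hlen₁]; omega
    have hget₁ : ∀ i (hi : i < (l'.take j).length),
        (l'.take j)[i]'hi = l'[i]'(by rw [hlen₁] at hi; omega) := by
      intro i hi; exact List.getElem_take
    apply isPathFromTo_mk hne₁
    · intro i hi
      rw [hget₁, hget₁]
      exact hchain i (by rw [hlen₁] at hi; omega)
    · rw [hget₁]; exact h0x
    · simp only [hlen₁]
      rw [hget₁ (j-1) (by rw [hlen₁]; omega)]
      have hc := hchain (j-1) (by omega)
      simp only [show j - 1 + 1 = j from by omega] at hc
      exact hc.trans hjy
    · intro i i' hi hi' hEq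
      rw [hget₁, hget₁] at hEq
      exact hinj i i' _ _ hEq
    · intro i hi hEq
      rw [hget₁] at hEq
      have : i = j := hinj i j _ hj (hEq.trans hjy.symm)
      rw [hlen₁] at hi; omega
  · -- path from y to x
    have hlen₂ : (l'.drop j).length = l'.length - j := by simp
    have hne₂ : l'.drop j ≠ [] := by
      rw [← List.length_pos_iff, hlen₂]; omega
    have hget₂ : ∀ i (hi : i < (l'.drop j).length),
        (l'.drop j)[i]'hi = l'[j+i]'(by rw [hlen₂] at hi; omega) := by
      intro i hi; exact List.getElem_drop
    apply isPathFromTo_mk hne₂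
    · intro i hi
      rw [hget₂, hget₂]
      have hi2 : j + i + 1 < l'.length := by rw [hlen₂] at hi; omega
      have hc := hchain (j + i) hi2
      simp only [show j + (i+1) = j + i + 1 from by omega]
      exact hc
    · rw [hget₂]
      simpa using hjy
    · simp only [hlen₂]
      rw [hget₂ (l'.length - j - 1) (by rw [hlen₂]; omega)]
      simp only [show j + (l'.length - j - 1) = l'.length - 1 from by omega]
      exact hwrap.trans h0x
    · intro i i' hi hi' hEq
      rw [hget₂, hget₂] at hEq
      have := hinj (j+i) (j+i') _ _ hEq
      omega
    · intro i hi hEq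
      rw [hget₂] at hEq
      have := hinj (j+i) 0 _ hn (hEq.trans h0x.symm)
      omega
  · -- multiset equality
    have hperm : l.Perm l' := (List.rotate_perm l k).symm
    have : (↑l : Multiset Q.A) = ↑l' := Quot.sound hperm
    rw [this, ← List.take_append_drop j l']
    simp

/-- A cycle whose arrows all lie in the pool `{b₁, b₂} ∪ Δ₁ ∪ Δ₂` must pass
through `y`. -/
lemma cycle_meets {x y : Q.V} (hxy : x ≠ y)
    {b₁ b₂ : Q.A} (hb₁ : Q.s b₁ = x ∧ Q.t b₁ = y) (hb₂ : Q.s b₂ = y ∧ Q.t b₂ = x)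
    {Δ₁ Δ₂ : List Q.A} (hΔ₁ : Q.IsPathFromTo Δ₁ x y) (hΔ₂ : Q.IsPathFromTo Δ₂ y x)
    (hdisj : ∀ v, v ∈ Q.pathVerts Δ₁ → v ∈ Q.pathVerts Δ₂ → v = x ∨ v = y)
    {l : List Q.A} (hcyc : Q.IsCycleList l)
    (hpool : ∀ b ∈ l, b = b₁ ∨ b = b₂ ∨ b ∈ Δ₁ ∨ b ∈ Δ₂) :
    y ∈ l.map Q.s := by
  by_contra hy
  have F₁ := hΔ₁.facts
  have F₂ := hΔ₂.facts
  have hl : l ≠ [] := hcyc.1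
  obtain ⟨_, hcy⟩ := hcyc
  have htgt_mem : ∀ b ∈ l, Q.t b ∈ l.map Q.s := fun b hb => IsCycleList.tgt_mem_src ⟨hl, hcy⟩ hb
  have hb₁l : b₁ ∉ l := fun h => hy (hb₁.2 ▸ htgt_mem b₁ h)
  have hb₂l : b₂ ∉ l := fun h => hy (hb₂.1 ▸ List.mem_map_of_mem (f := Q.s) h)
  have hlen₁ : 0 < Δ₁.length := List.length_pos_iff.mpr F₁.ne
  have hlen₂ : 0 < Δ₂.length := List.length_pos_iff.mpr F₂.ne
  -- successor of an arrow within the cycle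
  have hsucc : ∀ b ∈ l, ∃ c ∈ l, Q.s c = Q.t b := by
    intro b hb
    obtain ⟨i, hi, rfl⟩ := List.getElem_of_mem hb
    refine ⟨Q.cyc l hl (i+1), cyc_mem hl _, ?_⟩
    rw [← hcy i, cyc_eq_getElem hl hi]
  -- step within Δ₁
  have hstep₁ : ∀ i (hi : i + 1 < Δ₁.length) c, c ∈ l → Q.s c = Q.t (Δ₁[i]'(by omega)) →
      c = Δ₁[i+1]'hi := by
    intro i hi c hcl hsc
    have hu_ne_x : Q.t (Δ₁[i]'(by omega)) ≠ x := F₁.tgt_ne_head (by omega)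
    have hu_ne_y : Q.t (Δ₁[i]'(by omega)) ≠ y := F₁.tgt_ne_last (by omega) (by omega)
    rcases hpool c hcl with rfl | rfl | hc | hc
    · exact (hu_ne_x (by rw [← hsc]; exact hb₁.1)).elim
    · exact (hu_ne_y (by rw [← hsc]; exact hb₂.1)).elim
    · obtain ⟨i', hi', rfl⟩ := List.getElem_of_mem hc
      have : i' = i + 1 := by
        apply F₁.src_inj hi' hi
        rw [hsc, F₁.chain hi]
      subst this; rfl
    · exfalso
      obtain ⟨i', hi', rfl⟩ := List.getElem_of_mem hc
      have hm₂ : Q.s (Δ₂[i']'hi') ∈ Q.pathVerts Δ₂ := F₂.src_mem_verts hi'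
      have hm₁ : Q.s (Δ₂[i']'hi') ∈ Q.pathVerts Δ₁ := by
        rw [hsc]; exact F₁.tgt_mem_verts (by omega)
      rcases hdisj _ hm₁ hm₂ with h | h
      · exact hu_ne_x (hsc ▸ h)
      · exact hu_ne_y (hsc ▸ h)
  -- step within Δ₂
  have hstep₂ : ∀ i (hi : i + 1 < Δ₂.length) c, c ∈ l → Q.s c = Q.t (Δ₂[i]'(by omega)) →
      c = Δ₂[i+1]'hi := by
    intro i hi c hcl hsc
    have hu_ne_y : Q.t (Δ₂[i]'(by omega)) ≠ y := F₂.tgt_ne_head (by omega)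
    have hu_ne_x : Q.t (Δ₂[i]'(by omega)) ≠ x := F₂.tgt_ne_last (by omega) (by omega)
    rcases hpool c hcl with rfl | rfl | hc | hc
    · exact (hu_ne_x (by rw [← hsc]; exact hb₁.1)).elim
    · exact (hu_ne_y (by rw [← hsc]; exact hb₂.1)).elim
    · exfalso
      obtain ⟨i', hi', rfl⟩ := List.getElem_of_mem hc
      have hm₁ : Q.s (Δ₁[i']'hi') ∈ Q.pathVerts Δ₁ := F₁.src_mem_verts hi'
      have hm₂ : Q.s (Δ₁[i']'hi') ∈ Q.pathVerts Δ₂ := by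
        rw [hsc]; exact F₂.tgt_mem_verts (by omega)
      rcases hdisj _ hm₁ hm₂ with h | h
      · exact hu_ne_x (hsc ▸ h)
      · exact hu_ne_y (hsc ▸ h)
    · obtain ⟨i', hi', rfl⟩ := List.getElem_of_mem hc
      have : i' = i + 1 := by
        apply F₂.src_inj hi' hi
        rw [hsc, F₂.chain hi]
      subst this; rfl
  -- chase along Δ₁
  have claim₁ : ∀ m i (hi : i < Δ₁.length), i + m = Δ₁.length - 1 →
      (Δ₁[i]'hi) ∈ l → False := by
    intro m
    induction m with
    | zero =>
      intro i hi him hmem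
      have hi' : i = Δ₁.length - 1 := by omega
      subst hi'
      exact hy (F₁.tgt_last ▸ htgt_mem _ hmem)
    | succ m ih =>
      intro i hi him hmem
      have hi1 : i + 1 < Δ₁.length := by omega
      obtain ⟨c, hcl, hsc⟩ := hsucc _ hmem
      have := hstep₁ i hi1 c hcl hsc
      subst this
      exact ih (i+1) hi1 (by omega) hcl
  -- chase along Δ₂
  have claim₂ : ∀ m i (hi : i < Δ₂.length), i + m = Δ₂.length - 1 →
      (Δ₂[i]'hi) ∈ l → False := by
    intro m
    induction m with
    | zero =>
      intro i hi him hmem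
      have hi' : i = Δ₂.length - 1 := by omega
      subst hi'
      obtain ⟨c, hcl, hsc⟩ := hsucc _ hmem
      rw [F₂.tgt_last] at hsc
      rcases hpool c hcl with rfl | rfl | hc | hc
      · exact hb₁l hcl
      · exact hxy (by rw [← hsc]; exact hb₂.1)
      · obtain ⟨i', hi', rfl⟩ := List.getElem_of_mem hc
        have : i' = 0 := by
          by_contra h0
          exact F₁.src_ne_head hi' h0 hsc
        subst this
        exact claim₁ (Δ₁.length - 1) 0 hi' (by omega) hcl
      · obtain ⟨i', hi', rfl⟩ := List.getElem_of_mem hc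
        exact F₂.src_ne_last hi' hsc
    | succ m ih =>
      intro i hi him hmem
      have hi1 : i + 1 < Δ₂.length := by omega
      obtain ⟨c, hcl, hsc⟩ := hsucc _ hmem
      have := hstep₂ i hi1 c hcl hsc
      subst this
      exact ih (i+1) hi1 (by omega) hcl
  -- conclude
  have hhd : l.head hl ∈ l := List.head_mem hl
  rcases hpool _ hhd with h | h | h | h
  · exact hb₁l (h ▸ hhd)
  · exact hb₂l (h ▸ hhd)
  · obtain ⟨i, hi, hEq⟩ := List.getElem_of_mem h
    exact claim₁ (Δ₁.length - 1 - i) i hi (by omega) (hEq ▸ hhd)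
  · obtain ⟨i, hi, hEq⟩ := List.getElem_of_mem h
    exact claim₂ (Δ₂.length - 1 - i) i hi (by omega) (hEq ▸ hhd)

lemma exists_mem_of_mem_msum {α : Type} {P : Multiset (Multiset α)} {a : α}
    (h : a ∈ P.sum) : ∃ m ∈ P, a ∈ m := by
  induction P using Multiset.induction_on with
  | empty => simp at h
  | cons b s ih =>
    rw [Multiset.sum_cons] at h
    rcases Multiset.mem_add.mp h with h | h
    · exact ⟨b, Multiset.mem_cons_self _ _, h⟩
    · obtain ⟨m, hm, ha⟩ := ih h
      exact ⟨m, Multiset.mem_cons_of_mem hm, ha⟩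

lemma toFinset_val_of_nodup {α : Type} [DecidableEq α] {l : List α} (h : l.Nodup) :
    l.toFinset.val = (↑l : Multiset α) := by
  simp [List.toFinset, Multiset.toFinset, List.dedup_eq_self.mpr h]

lemma toFinset_eq_of_coe_eq {α : Type} [DecidableEq α] {l₁ l₂ : List α}
    (h : (↑l₁ : Multiset α) = ↑l₂) : l₁.toFinset = l₂.toFinset := by
  ext a
  simp only [List.mem_toFinset]
  constructor <;> intro ha
  · have : a ∈ (↑l₁ : Multiset α) := ha
    rw [h] at this; exact this
  · have : a ∈ (↑l₂ : Multiset α) := ha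
    rw [← h] at this; exact this
/-- let `(v₁, v₂)` be a connected pair with arrows `a₁ : v₁ → v₂`,
`a₂ : v₂ → v₁`, with exactly two directed paths each way, the extra paths `Γ₁`
(from `v₁` to `v₂`) and `Γ₂` (from `v₂` to `v₁`) being internally vertex-disjoint.
Then the only primitive cycles through both `v₁` and `v₂` are `p = (a₁, a₂)`,
`q₁ = (a₁, Γ₂)`, `q₂ = (Γ₁, a₂)` and `s = (Γ₁, Γ₂)`, and the multiset `U_q` of all
arrows of `q₁` and `q₂` has exactly the two partitions `{q₁, q₂}` and `{p, s}`. -/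
theorem stmt_15 (Q : Quiv) (v₁ v₂ : Q.V) (hne : v₁ ≠ v₂)
    (a₁ a₂ : Q.A) (ha₁ : Q.s a₁ = v₁ ∧ Q.t a₁ = v₂) (ha₂ : Q.s a₂ = v₂ ∧ Q.t a₂ = v₁)
    (Γ₁ Γ₂ : List Q.A)
    (hΓ₁ : Q.IsPathFromTo Γ₁ v₁ v₂) (hΓ₂ : Q.IsPathFromTo Γ₂ v₂ v₁)
    (hΓ₁ne : Γ₁ ≠ [a₁]) (hΓ₂ne : Γ₂ ≠ [a₂])
    (honly₁ : ∀ p : List Q.A, Q.IsPathFromTo p v₁ v₂ → p = [a₁] ∨ p = Γ₁)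
    (honly₂ : ∀ p : List Q.A, Q.IsPathFromTo p v₂ v₁ → p = [a₂] ∨ p = Γ₂)
    (hdisj : ∀ v : Q.V, v ∈ Q.pathVerts Γ₁ → v ∈ Q.pathVerts Γ₂ → v = v₁ ∨ v = v₂) :
    (∀ S ∈ Q.primCycles, v₁ ∈ Q.verts S → v₂ ∈ Q.verts S →
      S = {a₁, a₂} ∨ S = insert a₁ Γ₂.toFinset ∨ S = insert a₂ Γ₁.toFinset ∨
        S = Γ₁.toFinset ∪ Γ₂.toFinset) ∧
    ∀ P : Multiset (Finset Q.A),
      Q.IsCyclePartition ((a₁ ::ₘ (↑Γ₂ : Multiset Q.A)) + (a₂ ::ₘ (↑Γ₁ : Multiset Q.A))) P →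
        P = ({insert a₁ Γ₂.toFinset, insert a₂ Γ₁.toFinset} : Multiset (Finset Q.A)) ∨
        P = ({({a₁, a₂} : Finset Q.A), Γ₁.toFinset ∪ Γ₂.toFinset} : Multiset (Finset Q.A)) := by
  obtain ⟨hs₁, ht₁⟩ := ha₁
  obtain ⟨hs₂, ht₂⟩ := ha₂
  have F₁ := hΓ₁.facts
  have F₂ := hΓ₂.facts
  have hΓ₁nil : Γ₁ ≠ [] := F₁.ne
  have hΓ₂nil : Γ₂ ≠ [] := F₂.ne
  -- basic exclusion facts
  have ha₁Γ₁ : a₁ ∉ Γ₁ := by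
    intro h
    obtain ⟨i, hi, hEq⟩ := List.getElem_of_mem h
    have hi0 : i = 0 := by
      by_contra h0
      exact F₁.src_ne_head hi h0 (by rw [hEq, hs₁])
    have hil : i = Γ₁.length - 1 := by
      by_contra hL
      exact F₁.tgt_ne_last hi hL (by rw [hEq, ht₁])
    have hlen1 : Γ₁.length = 1 := by omega
    obtain ⟨a, rfl⟩ := List.length_eq_one_iff.mp hlen1
    apply hΓ₁ne
    subst hi0
    simpa using hEq ▸ rfl
  have ha₂Γ₂ : a₂ ∉ Γ₂ := by
    intro h
    obtain ⟨i, hi, hEq⟩ := List.getElem_of_mem h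
    have hi0 : i = 0 := by
      by_contra h0
      exact F₂.src_ne_head hi h0 (by rw [hEq, hs₂])
    have hil : i = Γ₂.length - 1 := by
      by_contra hL
      exact F₂.tgt_ne_last hi hL (by rw [hEq, ht₂])
    have hlen1 : Γ₂.length = 1 := by omega
    obtain ⟨a, rfl⟩ := List.length_eq_one_iff.mp hlen1
    apply hΓ₂ne
    subst hi0
    simpa using hEq ▸ rfl
  have ha₁Γ₂ : a₁ ∉ Γ₂ := by
    intro h
    obtain ⟨i, hi, hEq⟩ := List.getElem_of_mem h
    exact F₂.src_ne_last hi (by rw [hEq, hs₁])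
  have ha₂Γ₁ : a₂ ∉ Γ₁ := by
    intro h
    obtain ⟨i, hi, hEq⟩ := List.getElem_of_mem h
    exact F₁.src_ne_last hi (by rw [hEq, hs₂])
  have ha₁₂ : a₁ ≠ a₂ := by
    intro h
    exact hne (by rw [← hs₁, h, hs₂])
  have hΓdisj : ∀ b ∈ Γ₁, b ∉ Γ₂ := by
    intro b hb1 hb2
    obtain ⟨i, hi, rfl⟩ := List.getElem_of_mem hb1
    obtain ⟨i', hi', hEq⟩ := List.getElem_of_mem hb2
    have hm1 : Q.s (Γ₁[i]'hi) ∈ Q.pathVerts Γ₁ := F₁.src_mem_verts hi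
    have hm2 : Q.s (Γ₁[i]'hi) ∈ Q.pathVerts Γ₂ := by
      rw [← hEq]; exact F₂.src_mem_verts hi'
    rcases hdisj _ hm1 hm2 with h | h
    · exact F₂.src_ne_last hi' (by rw [hEq]; exact h)
    · exact F₁.src_ne_last hi h
  -- PART 1
  have part1 : ∀ S ∈ Q.primCycles, v₁ ∈ Q.verts S → v₂ ∈ Q.verts S →
      S = {a₁, a₂} ∨ S = insert a₁ Γ₂.toFinset ∨ S = insert a₂ Γ₁.toFinset ∨
        S = Γ₁.toFinset ∪ Γ₂.toFinset := by
    rintro S ⟨l, hprim, rfl⟩ h1 h2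
    have hverts : ∀ v, v ∈ Q.verts l.toFinset → v ∈ l.map Q.s := by
      intro v hv
      rw [verts, Finset.mem_union] at hv
      rcases hv with hv | hv
      · obtain ⟨a, ha, rfl⟩ := Finset.mem_image.mp hv
        exact List.mem_map_of_mem (List.mem_toFinset.mp ha)
      · obtain ⟨a, ha, rfl⟩ := Finset.mem_image.mp hv
        exact hprim.1.tgt_mem_src (List.mem_toFinset.mp ha)
    obtain ⟨P₁, P₂, hp₁, hp₂, hmul⟩ := Q.cycle_split hprim hne (hverts _ h1) (hverts _ h2)
    have hSF : l.toFinset = P₁.toFinset ∪ P₂.toFinset := by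
      rw [← List.toFinset_append]
      apply toFinset_eq_of_coe_eq
      rw [hmul]
      simp
    rcases honly₁ P₁ hp₁ with rfl | rfl <;> rcases honly₂ P₂ hp₂ with rfl | rfl
    · left; rw [hSF]; simp [← Finset.insert_eq]
    · right; left; rw [hSF]; simp [← Finset.insert_eq]
    · right; right; left; rw [hSF, Finset.union_comm]; simp [← Finset.insert_eq]
    · right; right; right; exact hSF
  refine ⟨part1, ?_⟩
  -- PART 2
  intro P hP
  obtain ⟨hPC, hPsum⟩ := hP
  set U : Multiset Q.A := (a₁ ::ₘ (↑Γ₂ : Multiset Q.A)) + (a₂ ::ₘ (↑Γ₁ : Multiset Q.A)) with hUdef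
  set mp : Multiset Q.A := a₁ ::ₘ a₂ ::ₘ 0 with hmpdef
  set mq₁ : Multiset Q.A := a₁ ::ₘ (↑Γ₂ : Multiset Q.A) with hmq₁def
  set mq₂ : Multiset Q.A := a₂ ::ₘ (↑Γ₁ : Multiset Q.A) with hmq₂def
  set ms : Multiset Q.A := (↑Γ₁ : Multiset Q.A) + (↑Γ₂ : Multiset Q.A) with hmsdef
  have hU : U = mq₁ + mq₂ := rfl
  have hU' : U = mp + ms := by
    rw [hUdef, hmpdef, hmsdef]
    simp only [hmq₁def, hmq₂def, ← Multiset.singleton_add]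
    abel
  -- classification of cycles in the partition
  have hclass : ∀ c ∈ P, (c : Finset Q.A).val = mp ∨ c.val = mq₁ ∨ c.val = mq₂ ∨ c.val = ms := by
    intro c hc
    obtain ⟨l, hprim, hlc⟩ := hPC c hc
    have hlnd : l.Nodup := hprim.2.of_map
    have hval : (c.val : Multiset Q.A) = ↑l := by
      rw [← hlc]; exact toFinset_val_of_nodup hlnd
    have hle : c.val ≤ U := by
      rw [← hPsum]
      exact Multiset.le_sum_of_mem (Multiset.mem_map_of_mem _ hc)
    have hpool : ∀ b ∈ l, b = a₁ ∨ b = a₂ ∨ b ∈ Γ₁ ∨ b ∈ Γ₂ := by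
      intro b hb
      have hbU : b ∈ U := Multiset.mem_of_le hle (by rw [hval]; exact hb)
      simp only [hUdef, hmq₁def, hmq₂def, Multiset.mem_add, Multiset.mem_cons,
        Multiset.mem_coe] at hbU
      tauto
    have h2 : v₂ ∈ l.map Q.s :=
      Q.cycle_meets hne ⟨hs₁, ht₁⟩ ⟨hs₂, ht₂⟩ hΓ₁ hΓ₂ hdisj hprim.1 hpool
    have h1 : v₁ ∈ l.map Q.s :=
      Q.cycle_meets (Ne.symm hne) ⟨hs₂, ht₂⟩ ⟨hs₁, ht₁⟩ hΓ₂ hΓ₁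
        (fun v hv2 hv1 => (hdisj v hv1 hv2).symm) hprim.1
        (fun b hb => by rcases hpool b hb with h | h | h | h <;> tauto)
    obtain ⟨P₁, P₂, hp₁, hp₂, hmul⟩ := Q.cycle_split hprim hne h1 h2
    rw [hval, hmul]
    rcases honly₁ P₁ hp₁ with rfl | rfl <;> rcases honly₂ P₂ hp₂ with rfl | rfl
    · left; rw [hmpdef]; rfl
    · right; left; rw [hmq₁def]
      simp [← Multiset.singleton_add]
    · right; right; left; rw [hmq₂def]
      simp only [← Multiset.singleton_add]
      abel
    · right; right; right; rw [hmsdef]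
  -- values of the four finsets
  have hvΓ₁ : Γ₁.toFinset.val = (↑Γ₁ : Multiset Q.A) := toFinset_val_of_nodup F₁.arrows_nodup
  have hvΓ₂ : Γ₂.toFinset.val = (↑Γ₂ : Multiset Q.A) := toFinset_val_of_nodup F₂.arrows_nodup
  have hvq₁ : (insert a₁ Γ₂.toFinset).val = mq₁ := by
    rw [Finset.insert_val_of_notMem (by simp [ha₁Γ₂]), hvΓ₂]
  have hvq₂ : (insert a₂ Γ₁.toFinset).val = mq₂ := by
    rw [Finset.insert_val_of_notMem (by simp [ha₂Γ₁]), hvΓ₁]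
  have hvp : ({a₁, a₂} : Finset Q.A).val = mp := by
    rw [show ({a₁, a₂} : Finset Q.A) = insert a₁ {a₂} from rfl,
      Finset.insert_val_of_notMem (by simp [ha₁₂])]
    rfl
  have hvs : (Γ₁.toFinset ∪ Γ₂.toFinset).val = ms := by
    have hnd : (Γ₁ ++ Γ₂).Nodup := by
      rw [List.nodup_append]
      exact ⟨F₁.arrows_nodup, F₂.arrows_nodup, fun b hb b' hb' hbb' => hΓdisj b hb (hbb' ▸ hb')⟩
    rw [← List.toFinset_append, toFinset_val_of_nodup hnd, hmsdef]
    simp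
  -- membership facts
  have hg₁ : Γ₁.head hΓ₁nil ∈ Γ₁ := List.head_mem hΓ₁nil
  have hg₁a₁ : Γ₁.head hΓ₁nil ≠ a₁ := fun h => ha₁Γ₁ (h ▸ hg₁)
  have hg₁a₂ : Γ₁.head hΓ₁nil ≠ a₂ := fun h => ha₂Γ₁ (h ▸ hg₁)
  have hg₁Γ₂ : Γ₁.head hΓ₁nil ∉ Γ₂ := hΓdisj _ hg₁
  have ha₁mq₂ : a₁ ∉ mq₂ := by
    rw [hmq₂def]; simp [ha₁₂, ha₁Γ₁]
  have ha₂ms : a₂ ∉ ms := by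
    rw [hmsdef]; simp [ha₂Γ₁, ha₂Γ₂]
  have ha₂mq₁ : a₂ ∉ mq₁ := by
    rw [hmq₁def]; simp [Ne.symm ha₁₂, ha₂Γ₂]
  have hg₁mq₁ : Γ₁.head hΓ₁nil ∉ mq₁ := by
    rw [hmq₁def]; simp [hg₁a₁, hg₁Γ₂]
  -- nonemptiness of the four values
  have hnonzero : mp ≠ 0 ∧ mq₁ ≠ 0 ∧ mq₂ ≠ 0 ∧ ms ≠ 0 := by
    refine ⟨?_, ?_, ?_, ?_⟩
    · rw [hmpdef]; simp
    · rw [hmq₁def]; simp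
    · rw [hmq₂def]; simp
    · intro h
      have hgm : Γ₁.head hΓ₁nil ∈ ms := by rw [hmsdef]; simp [hg₁]
      rw [h] at hgm
      simp at hgm
  -- find the cycle containing a₁
  have ha₁U : a₁ ∈ U := by simp [hUdef, hmq₁def, hmq₂def]
  obtain ⟨m, hmP, ha₁m⟩ := exists_mem_of_mem_msum (by rw [hPsum]; exact ha₁U :
    a₁ ∈ (P.map Finset.val).sum)
  obtain ⟨c₁, hc₁P, rfl⟩ := Multiset.mem_map.mp hmP
  have hrest : ∀ {c₂ : Finset Q.A} {rem : Multiset Q.A}, c₂ ∈ P.erase c₁ →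
      ((P.erase c₁).map Finset.val).sum = rem → a₂ ∈ c₂.val → c₂.val ≤ rem →
      ((P.erase c₁).erase c₂ = 0 → P = {c₁, c₂}) := by
    intro c₂ rem hc₂ hsum ha₂c₂ hle h0
    have hP1 : P = c₁ ::ₘ P.erase c₁ := (Multiset.cons_erase hc₁P).symm
    have hP2 : P.erase c₁ = c₂ ::ₘ (P.erase c₁).erase c₂ := (Multiset.cons_erase hc₂).symm
    rw [hP1, hP2, h0]
    rfl
  -- split on the type of c₁
  rcases hclass c₁ hc₁P with hc₁v | hc₁v | hc₁v | hc₁v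
  · -- c₁ is p : the partition is {p, s}
    right
    have hP1 : P = c₁ ::ₘ P.erase c₁ := (Multiset.cons_erase hc₁P).symm
    have hsum' : ((P.erase c₁).map Finset.val).sum = ms := by
      have : (P.map Finset.val).sum = U := hPsum
      rw [hP1] at this
      rw [Multiset.map_cons, Multiset.sum_cons, hc₁v, hU'] at this
      exact add_left_cancel this
    have hg₁ms : Γ₁.head hΓ₁nil ∈ ms := by
      rw [hmsdef]; simp [hg₁]
    obtain ⟨m, hmP, hg₁m⟩ := exists_mem_of_mem_msum (by rw [hsum']; exact hg₁ms :
      Γ₁.head hΓ₁nil ∈ ((P.erase c₁).map Finset.val).sum)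
    obtain ⟨c₂, hc₂P, rfl⟩ := Multiset.mem_map.mp hmP
    have hc₂le : c₂.val ≤ ms := by
      rw [← hsum']
      exact Multiset.le_sum_of_mem (Multiset.mem_map_of_mem _ hc₂P)
    have hc₂v : c₂.val = ms := by
      rcases hclass c₂ (Multiset.mem_of_mem_erase hc₂P) with h | h | h | h
      · exfalso
        have : a₂ ∈ ms := Multiset.mem_of_le hc₂le (by rw [h, hmpdef]; simp)
        exact ha₂ms this
      · exfalso
        rw [h] at hg₁m
        exact hg₁mq₁ hg₁m
      · exfalso
        have : a₂ ∈ ms := Multiset.mem_of_le hc₂le (by rw [h, hmq₂def]; simp)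
        exact ha₂ms this
      · exact h
    have hsum'' : (((P.erase c₁).erase c₂).map Finset.val).sum = 0 := by
      have hP2 : P.erase c₁ = c₂ ::ₘ (P.erase c₁).erase c₂ := (Multiset.cons_erase hc₂P).symm
      rw [hP2, Multiset.map_cons, Multiset.sum_cons, hc₂v] at hsum'
      have := hsum'
      nth_rewrite 2 [show ms = ms + 0 from (add_zero ms).symm] at this
      exact add_left_cancel this
    have h0 : (P.erase c₁).erase c₂ = 0 := by
      by_contra hne0
      obtain ⟨c, hc⟩ := Multiset.exists_mem_of_ne_zero hne0
      have : c.val ≤ 0 := by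
        rw [← hsum'']
        exact Multiset.le_sum_of_mem (Multiset.mem_map_of_mem _ hc)
      have hc0 : c.val = 0 := Multiset.le_zero.mp this
      have hcP : c ∈ P := Multiset.mem_of_mem_erase (Multiset.mem_of_mem_erase hc)
      rcases hclass c hcP with h | h | h | h <;> rw [h] at hc0
      · exact hnonzero.1 hc0
      · exact hnonzero.2.1 hc0
      · exact hnonzero.2.2.1 hc0
      · exact hnonzero.2.2.2 hc0
    have hPeq : P = {c₁, c₂} := by
      have hP2 : P.erase c₁ = c₂ ::ₘ (P.erase c₁).erase c₂ := (Multiset.cons_erase hc₂P).symm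
      rw [hP1, hP2, h0]
      rfl
    rw [hPeq]
    have e₁ : c₁ = ({a₁, a₂} : Finset Q.A) := Finset.val_injective (by rw [hc₁v, hvp])
    have e₂ : c₂ = Γ₁.toFinset ∪ Γ₂.toFinset := Finset.val_injective (by rw [hc₂v, hvs])
    rw [e₁, e₂]
  · -- c₁ is q₁ : the partition is {q₁, q₂}
    left
    have hP1 : P = c₁ ::ₘ P.erase c₁ := (Multiset.cons_erase hc₁P).symm
    have hsum' : ((P.erase c₁).map Finset.val).sum = mq₂ := by
      have : (P.map Finset.val).sum = U := hPsum
      rw [hP1] at this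
      rw [Multiset.map_cons, Multiset.sum_cons, hc₁v, hU] at this
      exact add_left_cancel this
    have ha₂mq₂ : a₂ ∈ mq₂ := by rw [hmq₂def]; simp
    obtain ⟨m, hmP, ha₂m⟩ := exists_mem_of_mem_msum (by rw [hsum']; exact ha₂mq₂ :
      a₂ ∈ ((P.erase c₁).map Finset.val).sum)
    obtain ⟨c₂, hc₂P, rfl⟩ := Multiset.mem_map.mp hmP
    have hc₂le : c₂.val ≤ mq₂ := by
      rw [← hsum']
      exact Multiset.le_sum_of_mem (Multiset.mem_map_of_mem _ hc₂P)
    have hc₂v : c₂.val = mq₂ := by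
      rcases hclass c₂ (Multiset.mem_of_mem_erase hc₂P) with h | h | h | h
      · exfalso
        have : a₁ ∈ mq₂ := Multiset.mem_of_le hc₂le (by rw [h, hmpdef]; simp)
        exact ha₁mq₂ this
      · exfalso
        have : a₁ ∈ mq₂ := Multiset.mem_of_le hc₂le (by rw [h, hmq₁def]; simp)
        exact ha₁mq₂ this
      · exact h
      · exfalso
        rw [h] at ha₂m
        exact ha₂ms ha₂m
    have hsum'' : (((P.erase c₁).erase c₂).map Finset.val).sum = 0 := by
      have hP2 : P.erase c₁ = c₂ ::ₘ (P.erase c₁).erase c₂ := (Multiset.cons_erase hc₂P).symm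
      rw [hP2, Multiset.map_cons, Multiset.sum_cons, hc₂v] at hsum'
      have := hsum'
      nth_rewrite 2 [show mq₂ = mq₂ + 0 from (add_zero mq₂).symm] at this
      exact add_left_cancel this
    have h0 : (P.erase c₁).erase c₂ = 0 := by
      by_contra hne0
      obtain ⟨c, hc⟩ := Multiset.exists_mem_of_ne_zero hne0
      have : c.val ≤ 0 := by
        rw [← hsum'']
        exact Multiset.le_sum_of_mem (Multiset.mem_map_of_mem _ hc)
      have hc0 : c.val = 0 := Multiset.le_zero.mp this
      have hcP : c ∈ P := Multiset.mem_of_mem_erase (Multiset.mem_of_mem_erase hc)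
      rcases hclass c hcP with h | h | h | h <;> rw [h] at hc0
      · exact hnonzero.1 hc0
      · exact hnonzero.2.1 hc0
      · exact hnonzero.2.2.1 hc0
      · exact hnonzero.2.2.2 hc0
    have hPeq : P = {c₁, c₂} := by
      have hP2 : P.erase c₁ = c₂ ::ₘ (P.erase c₁).erase c₂ := (Multiset.cons_erase hc₂P).symm
      rw [hP1, hP2, h0]
      rfl
    rw [hPeq]
    have e₁ : c₁ = insert a₁ Γ₂.toFinset := Finset.val_injective (by rw [hc₁v, hvq₁])
    have e₂ : c₂ = insert a₂ Γ₁.toFinset := Finset.val_injective (by rw [hc₂v, hvq₂])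
    rw [e₁, e₂]
  · -- c₁ cannot be q₂ (it contains a₁)
    exfalso
    rw [hc₁v] at ha₁m
    exact ha₁mq₂ ha₁m
  · -- c₁ cannot be s
    exfalso
    rw [hc₁v] at ha₁m
    rw [hmsdef] at ha₁m
    simp [ha₁Γ₁, ha₁Γ₂] at ha₁m

end Quiv
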